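/- Fix a policy π and suppose σ̲_{r,a}^π > 0 for every deviation pair (r,a) with m_r(π;μ₀) > 0. Define the certified radius ρ̂(π) = min over such pairs of [σ̲_{r,a}^π · m_r(π;μ₀)] / [|Ω|^{1/q} · M_{r,a}^π]. Then for every ε ∈ [0, ρ̂(π)] and every belief μ ∈ Δ(Ω) with ‖μ − μ₀‖_p ≤ ε (where 1/p + 1/q = 1), and every deviation pair (r,a), the obedience slack satisfies A_{r,a}(π;μ) ≥ 0. -/

import Mathlib

open Finset
open scoped ENNReal

def IsBelief {Ω : Type*} [Fintype Ω] (μ : Ω → ℝ) : Prop :=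
  (∀ ω, 0 ≤ μ ω) ∧ ∑ ω, μ ω = 1

noncomputable def costDiff {Ω E X : Type*}
    (flow : X → E → ℝ) (ℓ : Ω → E → ℝ → ℝ) (r a : E) (p : Ω × X) : ℝ :=
  ℓ p.1 a (flow p.2 a) - ℓ p.1 r (flow p.2 r)

def rsupp {Ω E X : Type*} (flow : X → E → ℝ) (π : Ω → X → ℝ) (r : E) : Set (Ω × X) :=
  {p : Ω × X | 0 < π p.1 p.2 * flow p.2 r}

/-- `σ̲_{r,a}^π`: worst-case deviation gap over the support of route `r`. -/
noncomputable def sigmaLo {Ω E X : Type*}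
    (flow : X → E → ℝ) (ℓ : Ω → E → ℝ → ℝ) (π : Ω → X → ℝ) (r a : E) : ℝ :=
  sInf (costDiff flow ℓ r a '' rsupp flow π r)

/-- `M_{r,a}^π = max(|σ̲|, |σ̄|)`. -/
noncomputable def sigmaM {Ω E X : Type*}
    (flow : X → E → ℝ) (ℓ : Ω → E → ℝ → ℝ) (π : Ω → X → ℝ) (r a : E) : ℝ :=
  max |sInf (costDiff flow ℓ r a '' rsupp flow π r)|
      |sSup (costDiff flow ℓ r a '' rsupp flow π r)|

/-- Expected recommendation mass `m_r(π;μ₀)`. -/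
noncomputable def rmass {Ω E X : Type*} [Fintype Ω] [Fintype X]
    (flow : X → E → ℝ) (π : Ω → X → ℝ) (μ₀ : Ω → ℝ) (r : E) : ℝ :=
  ∑ ω, μ₀ ω * ∑ x, π ω x * flow x r

/-- Certified robustness range for a fixed policy: if `σ̲_{r,a}^π > 0` for all pairs with
positive recommendation mass, then `π` remains obedient for every belief within
`ℓ_p`-distance `ε ≤ ρ̂(π)` of the nominal prior. -/
lemma ell1_le_card_rpow_mul_norm {Ω : Type*} [Fintype Ω] (p q : ℝ≥0∞) [Fact (1 ≤ p)]
    (hpq : 1 / p + 1 / q = 1) (c : Ω → ℝ) :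
    ∑ ω, |c ω| ≤ (Fintype.card Ω : ℝ) ^ (1 / q).toReal *
      ‖(WithLp.equiv p (Ω → ℝ)).symm c‖ := by
  have hconj : p.HolderConjugate q := ENNReal.holderConjugate_iff.mpr (by simpa [one_div] using hpq)
  rcases eq_or_ne p 1 with rfl | hp1
  · have hq : q = ∞ := (ENNReal.HolderConjugate.eq_top_iff_eq_one q 1).mpr rfl
    subst hq
    simp only [one_div, ENNReal.inv_top, ENNReal.toReal_zero, Real.rpow_zero, one_mul]
    have hn : ‖(WithLp.equiv 1 (Ω → ℝ)).symm c‖ = ∑ ω, |c ω| := by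
      rw [PiLp.norm_eq_sum (by norm_num)]
      simp [Real.norm_eq_abs]
    rw [hn]
  rcases eq_or_ne p ∞ with rfl | hptop
  · have hq : q = 1 := by
      have h := ENNReal.HolderConjugate.inv_add_inv_eq_one ∞ q
      rw [ENNReal.inv_top, zero_add, ENNReal.inv_eq_one] at h
      exact h
    subst hq
    simp only [one_div, inv_one, ENNReal.toReal_one, Real.rpow_one]
    have hn : ‖(WithLp.equiv ∞ (Ω → ℝ)).symm c‖ = ‖c‖ := by
      simpa using congrArg NNReal.toReal (PiLp.nnnorm_equiv_symm c)
    rw [hn]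
    calc ∑ ω, |c ω| ≤ ∑ _ω : Ω, ‖c‖ := by
          refine Finset.sum_le_sum fun ω _ => ?_
          simpa [Real.norm_eq_abs] using norm_le_pi_norm c ω
      _ = (Fintype.card Ω : ℝ) * ‖c‖ := by
          simp [Finset.sum_const, nsmul_eq_mul, Finset.card_univ]
  · -- 1 < p < ∞
    have hp0 : p ≠ 0 := ENNReal.HolderConjugate.ne_zero p q
    have hq0 : q ≠ 0 := ENNReal.HolderConjugate.ne_zero q p
    have hqtop : q ≠ ∞ := by
      rintro rfl
      apply hp1
      have h := ENNReal.HolderConjugate.inv_add_inv_eq_one p ∞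
      rw [ENNReal.inv_top, add_zero, ENNReal.inv_eq_one] at h
      exact h
    have hp1lt : 1 < p := lt_of_le_of_ne (ENNReal.HolderConjugate.one_le p q) (Ne.symm hp1)
    have hprgt : 1 < p.toReal := by
      rw [← ENNReal.toReal_one]
      exact ENNReal.toReal_strict_mono hptop hp1lt
    have hinv : p.toReal⁻¹ + q.toReal⁻¹ = 1 := by
      have h := congrArg ENNReal.toReal (ENNReal.HolderConjugate.inv_add_inv_eq_one p q)
      rwa [ENNReal.toReal_add (by simp [hp0]) (by simp [hq0]), ENNReal.toReal_inv,
        ENNReal.toReal_inv, ENNReal.toReal_one] at h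
    have hrconj : Real.HolderConjugate p.toReal q.toReal := Real.holderConjugate_iff.mpr ⟨hprgt, hinv⟩
    have hnorm : ‖(WithLp.equiv p (Ω → ℝ)).symm c‖
        = (∑ ω, |c ω| ^ p.toReal) ^ (1 / p.toReal) := by
      rw [PiLp.norm_eq_sum (by positivity)]
      simp [Real.norm_eq_abs]
    have key := Real.inner_le_Lp_mul_Lq_of_nonneg (s := Finset.univ)
      (f := fun ω => |c ω|) (g := fun _ => (1 : ℝ)) hrconj
      (fun i _ => abs_nonneg _) (fun i _ => zero_le_one)
    simp only [mul_one, Real.one_rpow, Finset.sum_const, nsmul_eq_mul,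
      Finset.card_univ] at key
    have ht : (1 / q).toReal = 1 / q.toReal := by
      rw [one_div, ENNReal.toReal_inv, one_div]
    rw [ht, hnorm, mul_comm]
    exact key

theorem certified_epsilon_range_policy
    {Ω E X : Type*} [Fintype Ω] [Fintype E] [Fintype X] [Nonempty Ω]
    (p q : ℝ≥0∞) [Fact (1 ≤ p)] (hpq : 1 / p + 1 / q = 1)
    (flow : X → E → ℝ) (hflow : ∀ x : X, (∀ e, 0 ≤ flow x e) ∧ ∑ e, flow x e = 1)
    (ℓ : Ω → E → ℝ → ℝ)
    (π : Ω → X → ℝ) (hπ : ∀ ω, (∀ x, 0 ≤ π ω x) ∧ ∑ x, π ω x = 1)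
    (μ₀ : Ω → ℝ) (hμ₀ : IsBelief μ₀) (hμ₀pos : ∀ ω, 0 < μ₀ ω)
    (hσ : ∀ r a : E, r ≠ a → 0 < rmass flow π μ₀ r → 0 < sigmaLo flow ℓ π r a)
    (ρhat : ℝ)
    (hρhat : ρhat = sInf {v : ℝ | ∃ r a : E, r ≠ a ∧ 0 < rmass flow π μ₀ r ∧
      v = sigmaLo flow ℓ π r a * rmass flow π μ₀ r /
            ((Fintype.card Ω : ℝ) ^ (1 / q).toReal * sigmaM flow ℓ π r a)}) :
    ∀ ε : ℝ, 0 ≤ ε → ε ≤ ρhat →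
      ∀ μ : Ω → ℝ, IsBelief μ →
        ‖(WithLp.equiv p (Ω → ℝ)).symm (μ - μ₀)‖ ≤ ε →
        ∀ r a : E, r ≠ a →
          0 ≤ ∑ ω, μ ω * ∑ x, π ω x * flow x r * costDiff flow ℓ r a (ω, x) := by
  intro ε hε0 hερ μ hμ hnorm r a hra
  have hFnn : ∀ ω x, 0 ≤ π ω x * flow x r :=
    fun ω x => mul_nonneg ((hπ ω).1 x) ((hflow x).1 r)
  set dd : Ω → ℝ := fun ω => ∑ x, π ω x * flow x r * costDiff flow ℓ r a (ω, x) with hdd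
  by_cases hm : 0 < rmass flow π μ₀ r
  swap
  · -- zero mass case: everything vanishes
    have hm0 : rmass flow π μ₀ r = 0 := by
      refine le_antisymm (not_lt.mp hm) ?_
      exact Finset.sum_nonneg fun ω _ => mul_nonneg (hμ₀pos ω).le
        (Finset.sum_nonneg fun x _ => hFnn ω x)
    have hterm : ∀ ω ∈ Finset.univ, μ₀ ω * ∑ x, π ω x * flow x r = 0 :=
      (Finset.sum_eq_zero_iff_of_nonneg fun ω _ => mul_nonneg (hμ₀pos ω).le
        (Finset.sum_nonneg fun x _ => hFnn ω x)).mp hm0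
    have hF0 : ∀ ω x, π ω x * flow x r = 0 := by
      intro ω x
      have h1 : ∑ x, π ω x * flow x r = 0 := by
        have := hterm ω (Finset.mem_univ ω)
        rcases mul_eq_zero.mp this with h | h
        · exact absurd h (hμ₀pos ω).ne'
        · exact h
      exact (Finset.sum_eq_zero_iff_of_nonneg fun x _ => hFnn ω x).mp h1 x
        (Finset.mem_univ x)
    have : ∀ ω, dd ω = 0 := by
      intro ω
      simp only [hdd]
      exact Finset.sum_eq_zero fun x _ => by rw [hF0 ω x, zero_mul]
    simp only [hdd] at this ⊢
    rw [Finset.sum_eq_zero fun ω _ => by rw [this ω, mul_zero]]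
  · have hσL : 0 < sigmaLo flow ℓ π r a := hσ r a hra hm
    set σL := sigmaLo flow ℓ π r a
    set M := sigmaM flow ℓ π r a with hMdef
    set T := costDiff flow ℓ r a '' rsupp flow π r with hT
    have hTfin : T.Finite := Set.Finite.image _ (Set.toFinite _)
    have hbddB : BddBelow T := hTfin.bddBelow
    have hbddA : BddAbove T := hTfin.bddAbove
    have hM0 : 0 < M :=
      lt_of_lt_of_le hσL (le_trans (le_abs_self _) (le_max_left _ _))
    -- pointwise lower bound
    have hlow : ∀ ω x, σL * (π ω x * flow x r)
        ≤ π ω x * flow x r * costDiff flow ℓ r a (ω, x) := by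
      intro ω x
      rcases (hFnn ω x).lt_or_eq with hpos | h0
      · have hmem : costDiff flow ℓ r a (ω, x) ∈ T := ⟨(ω, x), hpos, rfl⟩
        have := csInf_le hbddB hmem
        calc σL * (π ω x * flow x r) ≤ costDiff flow ℓ r a (ω, x) * (π ω x * flow x r) :=
              mul_le_mul_of_nonneg_right this hpos.le
          _ = π ω x * flow x r * costDiff flow ℓ r a (ω, x) := mul_comm _ _
      · rw [← h0]; simp
    -- bound on |dd ω|
    have hD : ∀ ω x, 0 < π ω x * flow x r → |costDiff flow ℓ r a (ω, x)| ≤ M := by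
      intro ω x hpos
      have hmem : costDiff flow ℓ r a (ω, x) ∈ T := ⟨(ω, x), hpos, rfl⟩
      refine abs_le.mpr ⟨?_, ?_⟩
      · have h1 : sInf T ≤ costDiff flow ℓ r a (ω, x) := csInf_le hbddB hmem
        have h2 : -M ≤ sInf T := by
          have := neg_abs_le (sInf T)
          refine le_trans ?_ this
          exact neg_le_neg (le_max_left _ _)
        linarith
      · have h1 : costDiff flow ℓ r a (ω, x) ≤ sSup T := le_csSup hbddA hmem
        have h2 : sSup T ≤ M := le_trans (le_abs_self _) (le_max_right _ _)
        linarith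
    have hmω : ∀ ω, ∑ x, π ω x * flow x r ≤ 1 := by
      intro ω
      calc ∑ x, π ω x * flow x r ≤ ∑ x, π ω x * 1 := by
            refine Finset.sum_le_sum fun x _ => ?_
            refine mul_le_mul_of_nonneg_left ?_ ((hπ ω).1 x)
            calc flow x r ≤ ∑ e, flow x e :=
                  Finset.single_le_sum (fun e _ => (hflow x).1 e) (Finset.mem_univ r)
              _ = 1 := (hflow x).2
        _ = 1 := by simp [(hπ ω).2]
    have hddbound : ∀ ω, |dd ω| ≤ M := by
      intro ω
      calc |dd ω| ≤ ∑ x, |π ω x * flow x r * costDiff flow ℓ r a (ω, x)| :=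
            Finset.abs_sum_le_sum_abs _ _
        _ ≤ ∑ x, π ω x * flow x r * M := by
            refine Finset.sum_le_sum fun x _ => ?_
            rw [abs_mul, abs_of_nonneg (hFnn ω x)]
            rcases (hFnn ω x).lt_or_eq with hpos | h0
            · exact mul_le_mul_of_nonneg_left (hD ω x hpos) (hFnn ω x)
            · rw [← h0]; simp [hM0.le]
        _ = (∑ x, π ω x * flow x r) * M := by rw [Finset.sum_mul]
        _ ≤ 1 * M := mul_le_mul_of_nonneg_right (hmω ω) hM0.le
        _ = M := one_mul M
    -- nominal obedience margin
    have hnom : σL * rmass flow π μ₀ r ≤ ∑ ω, μ₀ ω * dd ω := by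
      rw [rmass, Finset.mul_sum]
      refine Finset.sum_le_sum fun ω _ => ?_
      rw [← mul_assoc, mul_comm σL (μ₀ ω), mul_assoc]
      refine mul_le_mul_of_nonneg_left ?_ (hμ₀pos ω).le
      rw [Finset.mul_sum]
      exact Finset.sum_le_sum fun x _ => hlow ω x
    -- perturbation bound
    set t := (1 / q).toReal with htdef
    have hcard1 : (1 : ℝ) ≤ (Fintype.card Ω : ℝ) := by
      exact_mod_cast Fintype.card_pos
    have hcardt : 0 < (Fintype.card Ω : ℝ) ^ t :=
      Real.rpow_pos_of_pos (lt_of_lt_of_le zero_lt_one hcard1) t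
    have hpert : |∑ ω, (μ ω - μ₀ ω) * dd ω| ≤ (Fintype.card Ω : ℝ) ^ t * M * ε := by
      calc |∑ ω, (μ ω - μ₀ ω) * dd ω| ≤ ∑ ω, |(μ ω - μ₀ ω) * dd ω| :=
            Finset.abs_sum_le_sum_abs _ _
        _ ≤ ∑ ω, |μ ω - μ₀ ω| * M := by
            refine Finset.sum_le_sum fun ω _ => ?_
            rw [abs_mul]
            exact mul_le_mul_of_nonneg_left (hddbound ω) (abs_nonneg _)
        _ = (∑ ω, |(μ - μ₀) ω|) * M := by rw [Finset.sum_mul]; simp [Pi.sub_apply]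
        _ ≤ ((Fintype.card Ω : ℝ) ^ t * ‖(WithLp.equiv p (Ω → ℝ)).symm (μ - μ₀)‖) * M := by
            refine mul_le_mul_of_nonneg_right ?_ hM0.le
            exact ell1_le_card_rpow_mul_norm p q hpq (μ - μ₀)
        _ ≤ ((Fintype.card Ω : ℝ) ^ t * ε) * M := by
            refine mul_le_mul_of_nonneg_right ?_ hM0.le
            exact mul_le_mul_of_nonneg_left hnorm hcardt.le
        _ = (Fintype.card Ω : ℝ) ^ t * M * ε := by ring
    -- ε bound from ρhat
    have hεv : ε * ((Fintype.card Ω : ℝ) ^ t * M) ≤ σL * rmass flow π μ₀ r := by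
      have hvmem : σL * rmass flow π μ₀ r / ((Fintype.card Ω : ℝ) ^ t * M)
          ∈ {v : ℝ | ∃ r a : E, r ≠ a ∧ 0 < rmass flow π μ₀ r ∧
            v = sigmaLo flow ℓ π r a * rmass flow π μ₀ r /
              ((Fintype.card Ω : ℝ) ^ (1 / q).toReal * sigmaM flow ℓ π r a)} :=
        ⟨r, a, hra, hm, rfl⟩
      have hbdd : BddBelow {v : ℝ | ∃ r a : E, r ≠ a ∧ 0 < rmass flow π μ₀ r ∧
          v = sigmaLo flow ℓ π r a * rmass flow π μ₀ r /
            ((Fintype.card Ω : ℝ) ^ (1 / q).toReal * sigmaM flow ℓ π r a)} := by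
        refine ⟨0, fun v hv => ?_⟩
        obtain ⟨r', a', hra', hm', rfl⟩ := hv
        have h1 := hσ r' a' hra' hm'
        have h2 : (0:ℝ) ≤ sigmaM flow ℓ π r' a' :=
          le_trans (abs_nonneg _) (le_max_left _ _)
        have h3 : (0:ℝ) ≤ (Fintype.card Ω : ℝ) ^ (1 / q).toReal :=
          Real.rpow_nonneg (Nat.cast_nonneg _) _
        exact div_nonneg (mul_pos h1 hm').le (mul_nonneg h3 h2)
      have hle : ρhat ≤ σL * rmass flow π μ₀ r / ((Fintype.card Ω : ℝ) ^ t * M) := by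
        rw [hρhat]; exact csInf_le hbdd hvmem
      have hεle : ε ≤ σL * rmass flow π μ₀ r / ((Fintype.card Ω : ℝ) ^ t * M) :=
        le_trans hερ hle
      have hden : 0 < (Fintype.card Ω : ℝ) ^ t * M := mul_pos hcardt hM0
      exact (le_div_iff₀ hden).mp hεle
    -- combine
    have hsplit : ∑ ω, μ ω * dd ω = ∑ ω, μ₀ ω * dd ω + ∑ ω, (μ ω - μ₀ ω) * dd ω := by
      rw [← Finset.sum_add_distrib]
      exact Finset.sum_congr rfl fun ω _ => by ring
    have h1 : -((Fintype.card Ω : ℝ) ^ t * M * ε) ≤ ∑ ω, (μ ω - μ₀ ω) * dd ω :=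
      neg_le_of_abs_le hpert
    have : 0 ≤ ∑ ω, μ ω * dd ω := by
      rw [hsplit]
      have h2 : ε * ((Fintype.card Ω : ℝ) ^ t * M) = (Fintype.card Ω : ℝ) ^ t * M * ε := by ring
      nlinarith [hnom, h1, hεv]
    simpa [hdd] using this
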